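/- arXiv:1204.4420 — 5 statements merged into one kernel-verified Lean document; each statement's English description precedes it below -/
import Mathlib

section
/- There exists a constant C > 0 such that for every integer n ≥ 1 and every integer k with 0 ≤ k ≤ n, setting μ = 2k/n − 1, the binomial coefficient satisfies C(n,k) ≥ (1/C) · (2^n/√n) · exp(−n·𝓘(μ)). -/
/-- The entropy function 𝓘(x) = ((1+x)log(1+x) + (1-x)log(1-x))/2.
Note `Real.log 0 = 0` in Mathlib, which implements the convention 0·log 0 = 0. -/
noncomputable def entI (x : ℝ) : ℝ :=
  ((1 + x) * Real.log (1 + x) + (1 - x) * Real.log (1 - x)) / 2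

section helpers
open Real Stirling


lemma fact_eq (n : ℕ) (hn : 1 ≤ n) :
    (n.factorial : ℝ) = stirlingSeq n * (Real.sqrt (2 * n) * ((n : ℝ) / Real.exp 1) ^ n) := by
  have hn' : (0:ℝ) < n := by exact_mod_cast hn
  have h : (0:ℝ) < Real.sqrt (2 * n) * ((n : ℝ) / Real.exp 1) ^ n := by positivity
  rw [stirlingSeq, div_mul_cancel₀ _ h.ne']

lemma seq_ub (n : ℕ) (hn : 1 ≤ n) : stirlingSeq n ≤ Real.exp 1 / Real.sqrt 2 := by
  obtain ⟨m, rfl⟩ := Nat.exists_eq_add_of_le hn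
  rw [← stirlingSeq_one]
  simpa [Nat.succ_eq_add_one, Nat.add_comm] using stirlingSeq'_antitone (Nat.zero_le m)

lemma ident (k m : ℕ) (hk : 1 ≤ k) (hm : 1 ≤ m) :
    Real.exp (-((k + m : ℕ) : ℝ) * entI (2 * (k : ℝ) / ((k + m : ℕ) : ℝ) - 1)) =
      ((k + m : ℕ) : ℝ) ^ (k + m) / (2 ^ (k + m) * (k : ℝ) ^ k * (m : ℝ) ^ m) := by
  have hK : (0:ℝ) < k := by exact_mod_cast hk
  have hM : (0:ℝ) < m := by exact_mod_cast hm
  have hN : (0:ℝ) < ((k + m : ℕ) : ℝ) := by push_cast; linarith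
  rw [← Real.exp_log (show (0:ℝ) < ((k + m : ℕ) : ℝ) ^ (k + m) / (2 ^ (k + m) * (k : ℝ) ^ k * (m : ℝ) ^ m) by positivity)]
  congr 1
  have h1 : 1 + (2 * (k : ℝ) / ((k + m : ℕ) : ℝ) - 1) = 2 * (k : ℝ) / ((k + m : ℕ) : ℝ) := by ring
  have h2 : 1 - (2 * (k : ℝ) / ((k + m : ℕ) : ℝ) - 1) = 2 * (m : ℝ) / ((k + m : ℕ) : ℝ) := by
    push_cast; field_simp; ring
  rw [entI, h1, h2]
  have lk : Real.log (2 * (k : ℝ) / ((k + m : ℕ) : ℝ)) =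
      Real.log 2 + Real.log k - Real.log ((k + m : ℕ) : ℝ) := by
    rw [Real.log_div (by positivity) hN.ne', Real.log_mul two_ne_zero hK.ne']
  have lm : Real.log (2 * (m : ℝ) / ((k + m : ℕ) : ℝ)) =
      Real.log 2 + Real.log m - Real.log ((k + m : ℕ) : ℝ) := by
    rw [Real.log_div (by positivity) hN.ne', Real.log_mul two_ne_zero hM.ne']
  rw [lk, lm, Real.log_div (by positivity) (by positivity), Real.log_mul (by positivity) (by positivity),
    Real.log_mul (by positivity) (by positivity), Real.log_pow, Real.log_pow, Real.log_pow, Real.log_pow]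
  have hNc : ((k + m : ℕ) : ℝ) = (k : ℝ) + m := by push_cast; ring
  rw [hNc] at *
  field_simp
  ring

lemma key (a : ℝ) (ha : 0 < a) (hlow : ∀ n : ℕ, a ≤ stirlingSeq (n + 1))
    (k m : ℕ) (hk : 1 ≤ k) (hm : 1 ≤ m) :
    (a * Real.sqrt 2 / (Real.exp 1 / Real.sqrt 2) ^ 2) *
        ((2:ℝ) ^ (k + m) / Real.sqrt ((k + m : ℕ) : ℝ)) *
        Real.exp (-((k + m : ℕ) : ℝ) * entI (2 * (k : ℝ) / ((k + m : ℕ) : ℝ) - 1))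
      ≤ (((k + m).choose k : ℕ) : ℝ) := by
  set b : ℝ := Real.exp 1 / Real.sqrt 2 with hbdef
  have hb : 0 < b := by positivity
  have hK : (0:ℝ) < k := by exact_mod_cast hk
  have hM : (0:ℝ) < m := by exact_mod_cast hm
  set N : ℝ := ((k + m : ℕ) : ℝ) with hNdef
  have hNc : N = (k : ℝ) + m := by rw [hNdef]; push_cast; ring
  have hN : (0:ℝ) < N := by rw [hNc]; linarith
  rw [ident k m hk hm]
  -- lower bounds on factorials
  have hlow' : ∀ n : ℕ, 1 ≤ n → a ≤ stirlingSeq n := by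
    intro n hn
    obtain ⟨j, rfl⟩ := Nat.exists_eq_add_of_le hn
    simpa [Nat.add_comm] using hlow j
  have E := Real.exp 1
  have hFn : a * (Real.sqrt (2 * N) * (N / Real.exp 1) ^ (k + m)) ≤ ((k + m).factorial : ℝ) := by
    rw [fact_eq (k + m) (by omega)]
    have h : (0:ℝ) < Real.sqrt (2 * N) * (N / Real.exp 1) ^ (k + m) := by positivity
    exact mul_le_mul_of_nonneg_right (hlow' _ (by omega)) (by positivity)
  have hFk : (k.factorial : ℝ) ≤ b * (Real.sqrt (2 * k) * ((k : ℝ) / Real.exp 1) ^ k) := by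
    rw [fact_eq k hk]
    exact mul_le_mul_of_nonneg_right (seq_ub k hk) (by positivity)
  have hFm : (m.factorial : ℝ) ≤ b * (Real.sqrt (2 * m) * ((m : ℝ) / Real.exp 1) ^ m) := by
    rw [fact_eq m hm]
    exact mul_le_mul_of_nonneg_right (seq_ub m hm) (by positivity)
  have hchoose : (((k + m).choose k : ℕ) : ℝ) =
      ((k + m).factorial : ℝ) / ((k.factorial : ℝ) * (m.factorial : ℝ)) := by
    rw [Nat.cast_choose ℝ (by omega : k ≤ k + m), show k + m - k = m by omega]
  have hR : a * (Real.sqrt (2 * N) * (N / Real.exp 1) ^ (k + m)) /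
      ((b * (Real.sqrt (2 * k) * ((k : ℝ) / Real.exp 1) ^ k)) *
       (b * (Real.sqrt (2 * m) * ((m : ℝ) / Real.exp 1) ^ m)))
      ≤ (((k + m).choose k : ℕ) : ℝ) := by
    rw [hchoose]
    apply div_le_div₀ (by positivity) hFn (by positivity)
    exact mul_le_mul hFk hFm (by positivity) (by positivity)
  refine le_trans ?_ hR
  -- now pure algebra + sqrt estimate
  have hsq : Real.sqrt (2 * k) * Real.sqrt (2 * m) ≤ N := by
    rw [← Real.sqrt_mul (by positivity)]
    calc Real.sqrt (2 * (k:ℝ) * (2 * m)) ≤ Real.sqrt (N ^ 2) := by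
          apply Real.sqrt_le_sqrt; rw [hNc]; nlinarith [sq_nonneg ((k:ℝ) - m)]
      _ = N := Real.sqrt_sq hN.le
  have hsqN : Real.sqrt (2 * N) = Real.sqrt 2 * Real.sqrt N := Real.sqrt_mul (by norm_num) N
  have hNsq : Real.sqrt N * Real.sqrt N = N := Real.mul_self_sqrt hN.le
  have hEn : (Real.exp 1) ^ (k + m) = (Real.exp 1) ^ k * (Real.exp 1) ^ m := pow_add _ k m
  -- rewrite RHS of the target
  have hrw : a * (Real.sqrt (2 * N) * (N / Real.exp 1) ^ (k + m)) /
      ((b * (Real.sqrt (2 * k) * ((k : ℝ) / Real.exp 1) ^ k)) *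
       (b * (Real.sqrt (2 * m) * ((m : ℝ) / Real.exp 1) ^ m))) =
      (a / b ^ 2) * (Real.sqrt (2 * N) / (Real.sqrt (2 * k) * Real.sqrt (2 * m))) *
        (N ^ (k + m) / ((k : ℝ) ^ k * (m : ℝ) ^ m)) := by
    rw [div_pow, div_pow, div_pow, hEn]
    have h1 : Real.sqrt (2 * (k:ℝ)) ≠ 0 := by positivity
    have h2 : Real.sqrt (2 * (m:ℝ)) ≠ 0 := by positivity
    have h3 : (Real.exp 1) ≠ 0 := by positivity
    field_simp
  rw [hrw]
  have hlhs : (a * Real.sqrt 2 / b ^ 2) * ((2:ℝ) ^ (k + m) / Real.sqrt N) *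
      (N ^ (k + m) / (2 ^ (k + m) * (k : ℝ) ^ k * (m : ℝ) ^ m)) =
      (a / b ^ 2) * (Real.sqrt 2 / Real.sqrt N) *
        (N ^ (k + m) / ((k : ℝ) ^ k * (m : ℝ) ^ m)) := by
    have h4 : Real.sqrt N ≠ 0 := by positivity
    field_simp
  rw [hlhs]
  have hfrac : Real.sqrt 2 / Real.sqrt N ≤
      Real.sqrt (2 * N) / (Real.sqrt (2 * k) * Real.sqrt (2 * m)) := by
    have h5 : ∀ x : ℝ, 0 < x → Real.sqrt 2 / Real.sqrt x = Real.sqrt (2 * x) / x := by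
      intro x hx
      rw [Real.sqrt_mul (by norm_num), div_eq_div_iff (Real.sqrt_pos.2 hx).ne' hx.ne',
        mul_assoc, Real.mul_self_sqrt hx.le]
    rw [h5 N hN]
    gcongr
  gcongr


end helpers

theorem binomial_lower_bound :
    ∃ C : ℝ, 0 < C ∧ ∀ n k : ℕ, 1 ≤ n → k ≤ n →
      (1 / C) * ((2 : ℝ) ^ n / Real.sqrt n) *
          Real.exp (-(n : ℝ) * entI (2 * (k : ℝ) / (n : ℝ) - 1))
        ≤ (n.choose k : ℝ) := by
  obtain ⟨a, ha, hlow⟩ := Stirling.stirlingSeq'_bounded_by_pos_constant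
  refine ⟨max ((Real.exp 1 / Real.sqrt 2) ^ 2 / (a * Real.sqrt 2)) 1,
    lt_of_lt_of_le one_pos (le_max_right _ _), ?_⟩
  intro n k hn hk
  set C := max ((Real.exp 1 / Real.sqrt 2) ^ 2 / (a * Real.sqrt 2)) 1 with hCdef
  have hC1 : (1:ℝ) ≤ C := le_max_right _ _
  have hCpos : (0:ℝ) < C := lt_of_lt_of_le one_pos hC1
  have hnR : (1:ℝ) ≤ (n:ℝ) := by exact_mod_cast hn
  have hsn : (1:ℝ) ≤ Real.sqrt n := by
    rw [show (1:ℝ) = Real.sqrt 1 from Real.sqrt_one.symm]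
    exact Real.sqrt_le_sqrt hnR
  have hbody : ∀ j : ℕ, (1/C) * ((2:ℝ) ^ n / Real.sqrt n) * Real.exp (-(n:ℝ) * Real.log 2)
      ≤ (1 : ℝ) := by
    intro _
    have he : Real.exp (-(n:ℝ) * Real.log 2) = ((2:ℝ) ^ n)⁻¹ := by
      rw [neg_mul, ← Real.log_pow, ← Real.log_inv, Real.exp_log (by positivity)]
    rw [he]
    have hsn0 : Real.sqrt (n:ℝ) ≠ 0 := by positivity
    have h2n : ((2:ℝ) ^ n) ≠ 0 := by positivity
    have heq : (1/C) * ((2:ℝ) ^ n / Real.sqrt n) * ((2:ℝ) ^ n)⁻¹ = 1 / (C * Real.sqrt n) := by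
      field_simp
    rw [heq, div_le_one (by positivity)]
    nlinarith
  by_cases hk0 : k = 0
  · subst hk0
    have hμ : 2 * ((0:ℕ):ℝ) / (n:ℝ) - 1 = -1 := by simp
    rw [hμ, show entI (-1) = Real.log 2 by norm_num [entI], Nat.choose_zero_right]
    exact_mod_cast hbody 0
  by_cases hkn : k = n
  · subst hkn
    have hμ : 2 * ((k:ℕ):ℝ) / (k:ℝ) - 1 = 1 := by
      have : ((k:ℕ):ℝ) ≠ 0 := by
        have : 1 ≤ (k:ℝ) := by exact_mod_cast hn
        linarith
      field_simp
      norm_num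
    rw [hμ, show entI 1 = Real.log 2 by norm_num [entI], Nat.choose_self]
    exact_mod_cast hbody 0
  · have hk1 : 1 ≤ k := Nat.one_le_iff_ne_zero.2 hk0
    obtain ⟨m, rfl⟩ : ∃ m, n = k + m := ⟨n - k, by omega⟩
    have hm1 : 1 ≤ m := by omega
    refine le_trans ?_ (key a ha hlow k m hk1 hm1)
    have h6 : (Real.exp 1 / Real.sqrt 2) ^ 2 / (a * Real.sqrt 2) ≤ C := le_max_left _ _
    have h7 : 1 / C ≤ a * Real.sqrt 2 / (Real.exp 1 / Real.sqrt 2) ^ 2 := by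
      rw [div_le_div_iff₀ hCpos (by positivity)]
      have := (div_le_iff₀ (by positivity : (0:ℝ) < a * Real.sqrt 2)).1 h6
      nlinarith
    exact mul_le_mul_of_nonneg_right
      (mul_le_mul_of_nonneg_right h7 (by positivity)) (by positivity)
end

section
/- There exists a constant C > 0 (independent of N₁, N₂ and all parameters entering only through the following expressions) such that for all integers N₁, N₂ ≥ 1 with N = N₁ + N₂: (1/C)·(2^N/√(N₁N₂))·exp(N·max_{μ ∈ A} f(μ₁,μ₂)) ≤ Z_N ≤ 2^N·(N₁+1)·(N₂+1)·exp(N·sup_{[−1,1]²} f), where A = {(μ₁,μ₂) : N₁(1+μ₁)/2 ∈ ℤ, N₂(1+μ₂)/2 ∈ ℤ, |μ₁| ≤ 1, |μ₂| ≤ 1} is the set of attainable pairs of block magnetizations. -/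
open Finset

/-- The value of a spin encoded by a Boolean. -/
noncomputable def spin (b : Bool) : ℝ := if b then 1 else -1

/-- The Hamiltonian density g(μ₁,μ₂). -/
noncomputable def gBip (J11 J12 J22 h1 h2 a1 a2 μ1 μ2 : ℝ) : ℝ :=
  (1 / 2) * (a1 ^ 2 * J11 * μ1 ^ 2 + 2 * a1 * a2 * J12 * μ1 * μ2 + a2 ^ 2 * J22 * μ2 ^ 2)
    + a1 * h1 * μ1 + a2 * h2 * μ2

/-- The pressure functional f(μ₁,μ₂) = β g(μ₁,μ₂) − α₁𝓘(μ₁) − α₂𝓘(μ₂). -/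
noncomputable def fBip (β J11 J12 J22 h1 h2 a1 a2 μ1 μ2 : ℝ) : ℝ :=
  β * gBip J11 J12 J22 h1 h2 a1 a2 μ1 μ2 - a1 * entI μ1 - a2 * entI μ2

/-- Magnetization of the first block (the first N₁ spins). -/
noncomputable def mag1 (N1 N2 : ℕ) (σ : Fin (N1 + N2) → Bool) : ℝ :=
  (1 / (N1 : ℝ)) * ∑ i : Fin (N1 + N2), if (i : ℕ) < N1 then spin (σ i) else 0

/-- Magnetization of the second block (the last N₂ spins). -/
noncomputable def mag2 (N1 N2 : ℕ) (σ : Fin (N1 + N2) → Bool) : ℝ :=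
  (1 / (N2 : ℝ)) * ∑ i : Fin (N1 + N2), if N1 ≤ (i : ℕ) then spin (σ i) else 0

/-- The partition function of the bipartite mean-field model. -/
noncomputable def Zbip (β J11 J12 J22 h1 h2 : ℝ) (N1 N2 : ℕ) : ℝ :=
  ∑ σ : Fin (N1 + N2) → Bool,
    Real.exp (β * ((N1 : ℝ) + N2) *
      gBip J11 J12 J22 h1 h2 ((N1 : ℝ) / ((N1 : ℝ) + N2)) ((N2 : ℝ) / ((N1 : ℝ) + N2))
        (mag1 N1 N2 σ) (mag2 N1 N2 σ))

open Real

/-- number of true spins -/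
def cnt {n : ℕ} (τ : Fin n → Bool) : ℕ := #{i : Fin n | τ i}

lemma sum_spin {n : ℕ} (τ : Fin n → Bool) :
    ∑ i : Fin n, spin (τ i) = 2 * (cnt τ : ℝ) - n := by
  have : ∀ i, spin (τ i) = 2 * (if τ i then (1:ℝ) else 0) - 1 := by
    intro i; unfold spin; by_cases h : τ i <;> simp [h] <;> norm_num
  simp only [this, Finset.sum_sub_distrib, ← Finset.mul_sum, Finset.sum_boole, Finset.sum_const,
    Finset.card_univ, Fintype.card_fin, nsmul_eq_mul, mul_one]
  rfl

lemma fiber_card (n k : ℕ) :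
    #{τ : Fin n → Bool | cnt τ = k} = n.choose k := by
  classical
  have := Finset.card_bij'
    (i := fun (τ : Fin n → Bool) (_ : τ ∈ ({τ : Fin n → Bool | cnt τ = k} : Finset _)) =>
      ({i : Fin n | τ i} : Finset (Fin n)))
    (j := fun (s : Finset (Fin n)) (_ : s ∈ Finset.powersetCard k Finset.univ) =>
      (fun i => decide (i ∈ s)))
    (s := ({τ : Fin n → Bool | cnt τ = k} : Finset _))
    (t := Finset.powersetCard k Finset.univ)
    ?_ ?_ ?_ ?_
  · rw [this, Finset.card_powersetCard, Finset.card_univ, Fintype.card_fin]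
  · intro τ hτ
    simp only [Finset.mem_filter, Finset.mem_univ, true_and] at hτ
    simp [Finset.mem_powersetCard]
    exact hτ
  · intro s hs
    simp only [Finset.mem_powersetCard] at hs
    simp only [Finset.mem_filter, Finset.mem_univ, true_and, cnt]
    rw [← hs.2]
    exact Finset.mem_filter.mpr ⟨Finset.mem_univ _, by simp [cnt]⟩
  · intro τ hτ
    funext i
    simp
  · intro s hs
    ext i
    simp

lemma sum_bool_group (n : ℕ) (F : ℕ → ℝ) :
    ∑ τ : Fin n → Bool, F (cnt τ) =
    ∑ k ∈ Finset.range (n+1), (n.choose k : ℝ) * F k := by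
  classical
  rw [← Finset.sum_fiberwise_of_maps_to (g := fun τ : Fin n → Bool => cnt τ)
    (t := Finset.range (n+1)) (fun τ _ => by
      simp only [Finset.mem_range, Nat.lt_succ_iff, cnt]
      exact (Finset.card_filter_le _ _).trans (by simp))]
  refine Finset.sum_congr rfl fun k hk => ?_
  rw [Finset.sum_congr rfl (fun τ hτ => by
    simp only [Finset.mem_filter] at hτ
    rw [hτ.2]), Finset.sum_const, ← fiber_card n k]
  simp [mul_comm]

lemma sum_two_blocks (N1 N2 : ℕ) (F : ℝ → ℝ → ℝ) :
    ∑ σ : Fin (N1 + N2) → Bool, F (mag1 N1 N2 σ) (mag2 N1 N2 σ) =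
    ∑ k1 ∈ Finset.range (N1+1), ∑ k2 ∈ Finset.range (N2+1),
      (N1.choose k1 : ℝ) * (N2.choose k2 : ℝ) *
        F ((2*(k1:ℝ) - N1)/N1) ((2*(k2:ℝ) - N2)/N2) := by
  classical
  set e : ((Fin N1 → Bool) × (Fin N2 → Bool)) ≃ (Fin (N1+N2) → Bool) :=
    (Equiv.sumArrowEquivProdArrow (Fin N1) (Fin N2) Bool).symm.trans
      (Equiv.arrowCongr finSumFinEquiv (Equiv.refl Bool)) with he
  have happ : ∀ (p : (Fin N1 → Bool) × (Fin N2 → Bool)) (i : Fin (N1+N2)),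
      e p i = Sum.elim p.1 p.2 (finSumFinEquiv.symm i) := by
    intro p i
    simp [he, Equiv.sumArrowEquivProdArrow, Equiv.arrowCongr]
  have hm1 : ∀ p, mag1 N1 N2 (e p) = (2*(cnt p.1 : ℝ) - N1)/N1 := by
    intro p
    unfold mag1
    rw [Fin.sum_univ_add (f := fun i : Fin (N1+N2) => if (i:ℕ) < N1 then spin (e p i) else 0)]
    have h1 : ∀ i : Fin N1,
        (if ((Fin.castAdd N2 i : Fin (N1+N2)) : ℕ) < N1 then spin (e p (Fin.castAdd N2 i)) else 0)
          = spin (p.1 i) := by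
      intro i
      rw [if_pos (by simp [i.is_lt])]
      rw [happ, finSumFinEquiv_symm_apply_castAdd]
      rfl
    have h2 : ∀ i : Fin N2,
        (if ((Fin.natAdd N1 i : Fin (N1+N2)) : ℕ) < N1 then spin (e p (Fin.natAdd N1 i)) else 0)
          = 0 := by
      intro i
      rw [if_neg (by simp)]
    simp only [h1, h2, Finset.sum_const_zero, add_zero]
    rw [sum_spin]
    ring
  have hm2 : ∀ p, mag2 N1 N2 (e p) = (2*(cnt p.2 : ℝ) - N2)/N2 := by
    intro p
    unfold mag2
    rw [Fin.sum_univ_add (f := fun i : Fin (N1+N2) => if N1 ≤ (i:ℕ) then spin (e p i) else 0)]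
    have h1 : ∀ i : Fin N1,
        (if N1 ≤ ((Fin.castAdd N2 i : Fin (N1+N2)) : ℕ) then spin (e p (Fin.castAdd N2 i)) else 0)
          = 0 := by
      intro i
      rw [if_neg (by simp [i.is_lt, not_le])]
    have h2 : ∀ i : Fin N2,
        (if N1 ≤ ((Fin.natAdd N1 i : Fin (N1+N2)) : ℕ) then spin (e p (Fin.natAdd N1 i)) else 0)
          = spin (p.2 i) := by
      intro i
      rw [if_pos (by simp)]
      rw [happ, finSumFinEquiv_symm_apply_natAdd]
      rfl
    simp only [h1, h2, Finset.sum_const_zero, zero_add]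
    rw [sum_spin]
    ring
  rw [← Equiv.sum_comp e (fun σ => F (mag1 N1 N2 σ) (mag2 N1 N2 σ))]
  simp only [hm1, hm2]
  rw [Fintype.sum_prod_type]
  rw [sum_bool_group N1 (fun k1 => ∑ τ2 : Fin N2 → Bool,
    F ((2*(k1:ℝ) - N1)/N1) ((2*(cnt τ2 : ℝ) - N2)/N2))]
  refine Finset.sum_congr rfl fun k1 _ => ?_
  rw [sum_bool_group N2 (fun k2 => F ((2*(k1:ℝ) - N1)/N1) ((2*(k2:ℝ) - N2)/N2)),
    Finset.mul_sum]
  refine Finset.sum_congr rfl fun k2 _ => by ring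

open Real in
lemma exp_nat_log (k : ℕ) : Real.exp ((k:ℝ) * Real.log k) = (k:ℝ)^k := by
  cases k with
  | zero => simp
  | succ m => rw [← Real.log_pow, Real.exp_log (by positivity)]

lemma nat_pow_self_pos (k : ℕ) : (0:ℝ) < (k:ℝ)^k := by
  cases k with
  | zero => simp
  | succ m => positivity

lemma c_log_two_c (c n : ℝ) (hc : 0 ≤ c) (hn : 0 < n) :
    c * Real.log (2*c/n) = c * Real.log 2 + c * Real.log c - c * Real.log n := by
  rcases eq_or_lt_of_le hc with h | h
  · simp [← h]
  · rw [Real.log_div (by positivity) (by positivity), Real.log_mul two_ne_zero (ne_of_gt h)]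
    ring

/-- Key identity:  2^n * exp(-n·𝓘(μ_k)) = n^n / (k^k (n-k)^(n-k)). -/
lemma ent_identity (n k : ℕ) (hn : 1 ≤ n) (hk : k ≤ n) :
    (2:ℝ)^n * Real.exp (-(n:ℝ) * entI ((2*(k:ℝ) - n)/n)) =
      (n:ℝ)^n / ((k:ℝ)^k * ((n-k : ℕ):ℝ)^(n-k)) := by
  have hn0 : (0:ℝ) < n := by exact_mod_cast hn
  have hkr : (0:ℝ) ≤ k := by positivity
  have hjr : (0:ℝ) ≤ ((n-k:ℕ):ℝ) := by positivity
  have hcast : ((n-k:ℕ):ℝ) = (n:ℝ) - k := by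
    push_cast [Nat.cast_sub hk]; ring
  have h1 : 1 + (2*(k:ℝ) - n)/n = 2*(k:ℝ)/n := by field_simp; ring
  have h2 : 1 - (2*(k:ℝ) - n)/n = 2*((n-k:ℕ):ℝ)/n := by rw [hcast]; field_simp; ring
  have hent : (n:ℝ) * entI ((2*(k:ℝ) - n)/n)
      = (n:ℝ) * Real.log 2 + (k:ℝ) * Real.log k + ((n-k:ℕ):ℝ) * Real.log ((n-k:ℕ):ℝ)
        - (n:ℝ) * Real.log n := by
    unfold entI
    rw [h1, h2]
    have e1 := c_log_two_c (k:ℝ) n hkr hn0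
    have e2 := c_log_two_c ((n-k:ℕ):ℝ) n hjr hn0
    have expand : (n:ℝ) * ((2*(k:ℝ)/n * Real.log (2*(k:ℝ)/n)
        + 2*((n-k:ℕ):ℝ)/n * Real.log (2*((n-k:ℕ):ℝ)/n)) / 2)
        = (k:ℝ) * Real.log (2*(k:ℝ)/n) + ((n-k:ℕ):ℝ) * Real.log (2*((n-k:ℕ):ℝ)/n) := by
      field_simp
    rw [expand, e1, e2, hcast]
    ring
  have hexp : Real.exp (-((n:ℝ) * Real.log 2 + (k:ℝ) * Real.log k
      + ((n-k:ℕ):ℝ) * Real.log ((n-k:ℕ):ℝ) - (n:ℝ) * Real.log n))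
      = Real.exp ((n:ℝ) * Real.log n) /
        (Real.exp ((n:ℝ) * Real.log 2) * Real.exp ((k:ℝ)*Real.log k)
          * Real.exp (((n-k:ℕ):ℝ)*Real.log ((n-k:ℕ):ℝ))) := by
    rw [← Real.exp_add, ← Real.exp_add, ← Real.exp_sub]
    congr 1
    ring
  have h2n : Real.exp ((n:ℝ) * Real.log 2) = (2:ℝ)^n := by
    rw [← Real.log_pow, Real.exp_log (by positivity)]
  rw [show (-(n:ℝ) * entI ((2*(k:ℝ) - n)/n)) = -((n:ℝ) * entI ((2*(k:ℝ) - n)/n)) by ring, hent]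
  rw [hexp, h2n, exp_nat_log k, exp_nat_log (n-k),
    show Real.exp ((n:ℝ) * Real.log n) = (n:ℝ)^n from exp_nat_log n]
  have hk0 : (0:ℝ) < (k:ℝ)^k := nat_pow_self_pos k
  have hj0 : (0:ℝ) < ((n-k:ℕ):ℝ)^(n-k) := nat_pow_self_pos (n-k)
  have h2p : (0:ℝ) < (2:ℝ)^n := by positivity
  rw [← mul_div_assoc, div_eq_div_iff (mul_pos (mul_pos h2p hk0) hj0).ne'
    (mul_pos hk0 hj0).ne']
  ring


/-- Upper bound: choose n k * k^k * (n-k)^(n-k) ≤ n^n, in ℕ. -/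
lemma choose_upper_nat (n k : ℕ) (hk : k ≤ n) :
    n.choose k * k^k * (n-k)^(n-k) ≤ n^n := by
  have h : n^n = (k + (n-k))^n := by rw [Nat.add_sub_cancel' hk]
  rw [h, add_pow]
  have hmem : k ∈ Finset.range (n+1) := Finset.mem_range.mpr (Nat.lt_succ_of_le hk)
  calc n.choose k * k^k * (n-k)^(n-k)
      = k^k * (n-k)^(n-k) * n.choose k := by ring
    _ ≤ ∑ m ∈ Finset.range (n+1), k^m * (n-k)^(n-m) * n.choose m :=
        Finset.single_le_sum (f := fun m => k^m * (n-k)^(n-m) * n.choose m)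
          (fun i _ => Nat.zero_le _) hmem

lemma stirling_low (m : ℕ) (hm : 1 ≤ m) :
    Real.sqrt π * (Real.sqrt (2*m) * ((m:ℝ)/Real.exp 1)^m) ≤ (m.factorial : ℝ) := by
  obtain ⟨m', rfl⟩ := Nat.exists_eq_add_of_le hm
  have htend : Filter.Tendsto (Stirling.stirlingSeq ∘ Nat.succ) Filter.atTop
      (nhds (Real.sqrt π)) :=
    Stirling.tendsto_stirlingSeq_sqrt_pi.comp (Filter.tendsto_add_atTop_nat 1)
  have h1 : Real.sqrt π ≤ Stirling.stirlingSeq (1 + m') := by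
    have := Stirling.stirlingSeq'_antitone.le_of_tendsto htend m'
    simpa [Nat.succ_eq_add_one, Nat.add_comm] using this
  have hden : (0:ℝ) < Real.sqrt (2*(1+m')) * (((1+m':ℕ):ℝ)/Real.exp 1)^(1+m') := by
    have : (0:ℝ) < ((1+m':ℕ):ℝ) := by positivity
    positivity
  have := (le_div_iff₀ hden).mp (by
    simpa [Stirling.stirlingSeq] using h1)
  convert this using 3 <;> push_cast <;> rfl

lemma stirling_high (m : ℕ) (hm : 1 ≤ m) :
    (m.factorial : ℝ) ≤ (Real.exp 1 / Real.sqrt 2) * (Real.sqrt (2*m) * ((m:ℝ)/Real.exp 1)^m) := by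
  obtain ⟨m', rfl⟩ := Nat.exists_eq_add_of_le hm
  have h1 : Stirling.stirlingSeq (1 + m') ≤ Stirling.stirlingSeq 1 := by
    have := Stirling.stirlingSeq'_antitone (Nat.zero_le m')
    simpa [Nat.succ_eq_add_one, Nat.add_comm] using this
  rw [Stirling.stirlingSeq_one] at h1
  have hden : (0:ℝ) < Real.sqrt (2*(1+m')) * (((1+m':ℕ):ℝ)/Real.exp 1)^(1+m') := by
    have : (0:ℝ) < ((1+m':ℕ):ℝ) := by positivity
    positivity
  have := (div_le_iff₀ hden).mp (by
    simpa [Stirling.stirlingSeq] using h1)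
  convert this using 3 <;> push_cast <;> rfl

lemma choose_lower (n k : ℕ) (hn : 1 ≤ n) (hk : k ≤ n) :
    Real.exp (-2) * ((n:ℝ)^n / ((k:ℝ)^k * ((n-k:ℕ):ℝ)^(n-k))) / Real.sqrt n
      ≤ (n.choose k : ℝ) := by
  have hn0 : (0:ℝ) < n := by exact_mod_cast hn
  have hsn : (1:ℝ) ≤ Real.sqrt n := by
    rw [show (1:ℝ) = Real.sqrt 1 by simp]
    exact Real.sqrt_le_sqrt (by exact_mod_cast hn)
  have hsn0 : (0:ℝ) < Real.sqrt n := by linarith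
  have hexp1 : Real.exp (-2) ≤ 1 := Real.exp_le_one_iff.mpr (by norm_num)
  by_cases hk0 : k = 0
  · subst hk0
    simp only [Nat.choose_zero_right, Nat.cast_one, Nat.cast_zero, pow_zero, one_mul,
      Nat.sub_zero]
    rw [div_self (by positivity), mul_one, div_le_one hsn0]
    linarith
  by_cases hkn : k = n
  · subst hkn
    simp only [Nat.choose_self, Nat.cast_one, Nat.sub_self, Nat.cast_zero, pow_zero, mul_one]
    rw [div_self (by positivity), mul_one, div_le_one hsn0]
    linarith
  -- middle case
  have hk1 : 1 ≤ k := Nat.one_le_iff_ne_zero.mpr hk0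
  set j := n - k with hjdef
  have hj1 : 1 ≤ j := by omega
  have hkjn : k + j = n := by omega
  have hkr : (0:ℝ) < k := by exact_mod_cast hk1
  have hjr : (0:ℝ) < j := by exact_mod_cast hj1
  have hA := stirling_low n hn
  have hBk := stirling_high k hk1
  have hBj := stirling_high j hj1
  have hc0 : (0:ℝ) < n.choose k := by exact_mod_cast Nat.choose_pos hk
  set e1 : ℝ := Real.exp 1 with he1
  set A : ℝ := Real.sqrt π * (Real.sqrt (2*n) * ((n:ℝ)/e1)^n) with hA_def
  set D : ℝ := (e1/Real.sqrt 2) * (Real.sqrt (2*k) * ((k:ℝ)/e1)^k)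
      * ((e1/Real.sqrt 2) * (Real.sqrt (2*j) * ((j:ℝ)/e1)^j)) with hD_def
  set T : ℝ := (n:ℝ)^n / ((k:ℝ)^k * (j:ℝ)^j) with hT_def
  have hD0 : 0 < D := by
    rw [hD_def]
    have h2 : (0:ℝ) < Real.sqrt 2 := by positivity
    positivity
  have hfac : (n.factorial : ℝ) = (n.choose k : ℝ) * ((k.factorial : ℝ) * (j.factorial : ℝ)) := by
    rw [← Nat.choose_mul_factorial_mul_factorial hk]
    push_cast
    ring
  have hchain : A ≤ (n.choose k : ℝ) * D := by
    calc A ≤ (n.factorial : ℝ) := hA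
      _ = (n.choose k : ℝ) * ((k.factorial : ℝ) * (j.factorial : ℝ)) := hfac
      _ ≤ (n.choose k : ℝ) * D := by
          rw [hD_def]
          gcongr
  have hTe : T * (((k:ℝ)/e1)^k * ((j:ℝ)/e1)^j) = ((n:ℝ)/e1)^n := by
    rw [hT_def, div_pow, div_pow, div_pow]
    have hek : (0:ℝ) < e1^k := by positivity
    have hej : (0:ℝ) < e1^j := by positivity
    have hkk : (0:ℝ) < (k:ℝ)^k := by positivity
    have hjj : (0:ℝ) < (j:ℝ)^j := by positivity
    field_simp
    rw [← pow_add, hkjn]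
    rw [div_self (by positivity)]
  have h12 : Real.exp (-2) * (e1/Real.sqrt 2)^2 = 1/2 := by
    rw [div_pow, Real.sq_sqrt (by norm_num : (0:ℝ) ≤ 2), he1, Real.exp_one_pow,
      ← mul_div_assoc, ← Real.exp_add]
    norm_num
  have hkj_sqrt : Real.sqrt (2*(k:ℝ)) * Real.sqrt (2*(j:ℝ)) = 2 * Real.sqrt ((k:ℝ)*j) := by
    rw [← Real.sqrt_mul (by positivity), show (2*(k:ℝ))*(2*(j:ℝ)) = 2^2*((k:ℝ)*j) by ring,
      Real.sqrt_mul (by positivity), Real.sqrt_sq (by norm_num : (0:ℝ) ≤ 2)]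
  have hcoeff : Real.sqrt ((k:ℝ)*j) ≤ Real.sqrt π * Real.sqrt (2*(n:ℝ)) * Real.sqrt (n:ℝ) := by
    have hkn' : (k:ℝ) ≤ n := by exact_mod_cast hk
    have hjn' : (j:ℝ) ≤ n := by exact_mod_cast (by omega : j ≤ n)
    have h1 : Real.sqrt ((k:ℝ)*j) ≤ (n:ℝ) := by
      calc Real.sqrt ((k:ℝ)*j) ≤ Real.sqrt ((n:ℝ)*(n:ℝ)) :=
            Real.sqrt_le_sqrt (by nlinarith)
        _ = (n:ℝ) := Real.sqrt_mul_self hn0.le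
    have h2 : (n:ℝ) ≤ Real.sqrt (2*(n:ℝ)) * Real.sqrt (n:ℝ) := by
      rw [← Real.sqrt_mul (by positivity)]
      calc (n:ℝ) = Real.sqrt ((n:ℝ)*(n:ℝ)) := (Real.sqrt_mul_self hn0.le).symm
        _ ≤ Real.sqrt (2*(n:ℝ)*(n:ℝ)) := Real.sqrt_le_sqrt (by nlinarith)
    have h3 : (1:ℝ) ≤ Real.sqrt π := by
      rw [show (1:ℝ) = Real.sqrt 1 by simp]
      exact Real.sqrt_le_sqrt (by linarith [Real.pi_gt_three])
    have h4 : (0:ℝ) ≤ Real.sqrt (2*(n:ℝ)) * Real.sqrt (n:ℝ) := by positivity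
    calc Real.sqrt ((k:ℝ)*j) ≤ (n:ℝ) := h1
      _ ≤ Real.sqrt (2*(n:ℝ)) * Real.sqrt (n:ℝ) := h2
      _ ≤ Real.sqrt π * (Real.sqrt (2*(n:ℝ)) * Real.sqrt (n:ℝ)) :=
          le_mul_of_one_le_left h4 h3
      _ = Real.sqrt π * Real.sqrt (2*(n:ℝ)) * Real.sqrt (n:ℝ) := by ring
  have key : Real.exp (-2) * T * D ≤ A * Real.sqrt n := by
    calc Real.exp (-2) * T * D
        = (Real.exp (-2) * (e1/Real.sqrt 2)^2) * (Real.sqrt (2*(k:ℝ)) * Real.sqrt (2*(j:ℝ)))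
            * (T * (((k:ℝ)/e1)^k * ((j:ℝ)/e1)^j)) := by rw [hD_def]; push_cast; ring
      _ = (1/2) * (2 * Real.sqrt ((k:ℝ)*j)) * ((n:ℝ)/e1)^n := by
            rw [h12, hkj_sqrt, hTe]
      _ = Real.sqrt ((k:ℝ)*j) * ((n:ℝ)/e1)^n := by ring
      _ ≤ (Real.sqrt π * Real.sqrt (2*(n:ℝ)) * Real.sqrt (n:ℝ)) * ((n:ℝ)/e1)^n := by
            apply mul_le_mul_of_nonneg_right hcoeff (by positivity)
      _ = A * Real.sqrt n := by rw [hA_def]; push_cast; ring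
  rw [div_le_iff₀ hsn0]
  have step : Real.exp (-2) * T * D ≤ ((n.choose k : ℝ) * Real.sqrt n) * D := by
    calc Real.exp (-2) * T * D ≤ A * Real.sqrt n := key
      _ ≤ ((n.choose k : ℝ) * D) * Real.sqrt n :=
          mul_le_mul_of_nonneg_right hchain (Real.sqrt_nonneg _)
      _ = ((n.choose k : ℝ) * Real.sqrt n) * D := by ring
  have := le_of_mul_le_mul_right step hD0
  calc Real.exp (-2) * ((n:ℝ)^n / ((k:ℝ)^k * ((n-k:ℕ):ℝ)^(n-k))) = Real.exp (-2) * T := by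
        rw [hT_def, hjdef]
    _ ≤ (n.choose k : ℝ) * Real.sqrt n := this

lemma mu_mem_Icc (n k : ℕ) (hn : 1 ≤ n) (hk : k ≤ n) :
    (2*(k:ℝ) - n)/n ∈ Set.Icc (-1:ℝ) 1 := by
  have hn0 : (0:ℝ) < n := by exact_mod_cast hn
  have hkn : (k:ℝ) ≤ n := by exact_mod_cast hk
  have hk0 : (0:ℝ) ≤ k := by positivity
  constructor
  · rw [le_div_iff₀ hn0]; linarith
  · rw [div_le_iff₀ hn0]; linarith

lemma t_log_t_bounds {t : ℝ} (h0 : 0 ≤ t) (h2 : t ≤ 2) :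
    -1 ≤ t * Real.log t ∧ t * Real.log t ≤ 2 := by
  rcases eq_or_lt_of_le h0 with h | h
  · simp [← h]
  · constructor
    · have hlog : Real.log t⁻¹ ≤ t⁻¹ - 1 := Real.log_le_sub_one_of_pos (by positivity)
      rw [Real.log_inv] at hlog
      have ht : t * t⁻¹ = 1 := mul_inv_cancel₀ h.ne'
      nlinarith
    · have hlog : Real.log t ≤ t - 1 := Real.log_le_sub_one_of_pos h
      nlinarith

lemma entI_bounds {x : ℝ} (hx : |x| ≤ 1) : -1 ≤ entI x ∧ entI x ≤ 2 := by
  obtain ⟨hl, hr⟩ := abs_le.mp hx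
  have h1 := t_log_t_bounds (t := 1+x) (by linarith) (by linarith)
  have h2 := t_log_t_bounds (t := 1-x) (by linarith) (by linarith)
  unfold entI
  constructor
  · linarith [h1.1, h2.1]
  · linarith [h1.2, h2.2]

lemma mul_le_abs_left {c x : ℝ} (hx : |x| ≤ 1) : c * x ≤ |c| :=
  calc c * x ≤ |c * x| := le_abs_self _
    _ = |c| * |x| := abs_mul _ _
    _ ≤ |c| * 1 := mul_le_mul_of_nonneg_left hx (abs_nonneg c)
    _ = |c| := mul_one _

lemma gBip_le (J11 J12 J22 h1 h2 a1 a2 μ1 μ2 : ℝ) (ha1 : 0 ≤ a1) (ha1' : a1 ≤ 1)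
    (ha2 : 0 ≤ a2) (ha2' : a2 ≤ 1) (hμ1 : |μ1| ≤ 1) (hμ2 : |μ2| ≤ 1) :
    gBip J11 J12 J22 h1 h2 a1 a2 μ1 μ2 ≤ |J11| + |J12| + |J22| + |h1| + |h2| := by
  have e : gBip J11 J12 J22 h1 h2 a1 a2 μ1 μ2
      = J11 * (a1^2*μ1^2/2) + J12*(a1*a2*(μ1*μ2)) + J22*(a2^2*μ2^2/2)
        + h1*(a1*μ1) + h2*(a2*μ2) := by unfold gBip; ring
  obtain ⟨l1, r1⟩ := abs_le.mp hμ1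
  obtain ⟨l2, r2⟩ := abs_le.mp hμ2
  have hμ1sq : μ1^2 ≤ 1 := by nlinarith
  have hμ2sq : μ2^2 ≤ 1 := by nlinarith
  have ha1sq : a1^2 ≤ 1 := by nlinarith
  have ha2sq : a2^2 ≤ 1 := by nlinarith
  have b1 : |a1^2*μ1^2/2| ≤ 1 := by
    rw [abs_le]; constructor <;> nlinarith [sq_nonneg a1, sq_nonneg μ1, sq_nonneg (a1*μ1)]
  have b3 : |a2^2*μ2^2/2| ≤ 1 := by
    rw [abs_le]; constructor <;> nlinarith [sq_nonneg a2, sq_nonneg μ2, sq_nonneg (a2*μ2)]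
  have hm : |μ1*μ2| ≤ 1 := by
    rw [abs_mul]
    calc |μ1| * |μ2| ≤ 1 * 1 :=
          mul_le_mul hμ1 hμ2 (abs_nonneg _) zero_le_one
      _ = 1 := mul_one 1
  have b2 : |a1*a2*(μ1*μ2)| ≤ 1 := by
    rw [abs_mul, abs_of_nonneg (mul_nonneg ha1 ha2)]
    have haa : a1 * a2 ≤ 1 := by
      calc a1 * a2 ≤ 1 * 1 := mul_le_mul ha1' ha2' ha2 zero_le_one
        _ = 1 := mul_one 1
    calc a1 * a2 * |μ1*μ2| ≤ 1 * 1 := mul_le_mul haa hm (abs_nonneg _) zero_le_one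
      _ = 1 := mul_one 1
  have b4 : |a1*μ1| ≤ 1 := by
    rw [abs_mul, abs_of_nonneg ha1]
    calc a1 * |μ1| ≤ 1 * 1 := mul_le_mul ha1' hμ1 (abs_nonneg _) zero_le_one
      _ = 1 := mul_one 1
  have b5 : |a2*μ2| ≤ 1 := by
    rw [abs_mul, abs_of_nonneg ha2]
    calc a2 * |μ2| ≤ 1 * 1 := mul_le_mul ha2' hμ2 (abs_nonneg _) zero_le_one
      _ = 1 := mul_one 1
  rw [e]
  linarith [mul_le_abs_left (c := J11) b1, mul_le_abs_left (c := J12) b2,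
    mul_le_abs_left (c := J22) b3, mul_le_abs_left (c := h1) b4,
    mul_le_abs_left (c := h2) b5]

/-- Upper bound for binomial coefficients in entropy form. -/
lemma choose_le_ent (n k : ℕ) (hn : 1 ≤ n) (hk : k ≤ n) :
    (n.choose k : ℝ) ≤ (2:ℝ)^n * Real.exp (-(n:ℝ) * entI ((2*(k:ℝ) - n)/n)) := by
  rw [ent_identity n k hn hk]
  have h := choose_upper_nat n k hk
  have hkk := nat_pow_self_pos k
  have hjj := nat_pow_self_pos (n-k)
  rw [le_div_iff₀ (mul_pos hkk hjj), ← mul_assoc]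
  exact_mod_cast h

/-- Lower bound for binomial coefficients in entropy form. -/
lemma ent_le_choose (n k : ℕ) (hn : 1 ≤ n) (hk : k ≤ n) :
    Real.exp (-2) * ((2:ℝ)^n * Real.exp (-(n:ℝ) * entI ((2*(k:ℝ) - n)/n))) / Real.sqrt n
      ≤ (n.choose k : ℝ) := by
  rw [ent_identity n k hn hk]
  exact choose_lower n k hn hk

set_option maxHeartbeats 2000000 in
theorem partition_function_bounds :
    ∃ C : ℝ, 0 < C ∧
      ∀ (J11 J12 J22 h1 h2 β : ℝ), 0 < β → ∀ N1 N2 : ℕ, 1 ≤ N1 → 1 ≤ N2 →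
        ((∀ μ1 μ2 : ℝ, |μ1| ≤ 1 → |μ2| ≤ 1 →
            (∃ k1 : ℤ, (N1 : ℝ) * (1 + μ1) / 2 = (k1 : ℝ)) →
            (∃ k2 : ℤ, (N2 : ℝ) * (1 + μ2) / 2 = (k2 : ℝ)) →
            (1 / C) * ((2 : ℝ) ^ (N1 + N2) / Real.sqrt ((N1 : ℝ) * N2)) *
                Real.exp (((N1 : ℝ) + N2) *
                  fBip β J11 J12 J22 h1 h2 ((N1 : ℝ) / ((N1 : ℝ) + N2))
                    ((N2 : ℝ) / ((N1 : ℝ) + N2)) μ1 μ2)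
              ≤ Zbip β J11 J12 J22 h1 h2 N1 N2) ∧
          Zbip β J11 J12 J22 h1 h2 N1 N2
            ≤ (2 : ℝ) ^ (N1 + N2) * ((N1 : ℝ) + 1) * ((N2 : ℝ) + 1) *
                Real.exp (((N1 : ℝ) + N2) *
                  sSup ((fun p : ℝ × ℝ =>
                      fBip β J11 J12 J22 h1 h2 ((N1 : ℝ) / ((N1 : ℝ) + N2))
                        ((N2 : ℝ) / ((N1 : ℝ) + N2)) p.1 p.2) ''
                    (Set.Icc (-1 : ℝ) 1 ×ˢ Set.Icc (-1 : ℝ) 1)))) := by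
  refine ⟨Real.exp 4, Real.exp_pos 4, ?_⟩
  intro J11 J12 J22 h1 h2 β hβ N1 N2 hN1 hN2
  have hN1r : (0:ℝ) < N1 := by exact_mod_cast hN1
  have hN2r : (0:ℝ) < N2 := by exact_mod_cast hN2
  have hNr : (0:ℝ) < (N1:ℝ) + N2 := by linarith
  set a1 : ℝ := (N1:ℝ)/((N1:ℝ)+N2) with ha1_def
  set a2 : ℝ := (N2:ℝ)/((N1:ℝ)+N2) with ha2_def
  have ha1pos : 0 < a1 := div_pos hN1r hNr
  have ha2pos : 0 < a2 := div_pos hN2r hNr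
  have ha1le : a1 ≤ 1 := by rw [ha1_def, div_le_one hNr]; linarith
  have ha2le : a2 ≤ 1 := by rw [ha2_def, div_le_one hNr]; linarith
  have hX : ∀ μ : ℝ, ((N1:ℝ)+N2) * (a1 * μ) = N1 * μ := by
    intro μ; rw [ha1_def]; field_simp
  have hY : ∀ μ : ℝ, ((N1:ℝ)+N2) * (a2 * μ) = N2 * μ := by
    intro μ; rw [ha2_def]; field_simp
  -- the grouped form of the partition function
  have hZ : Zbip β J11 J12 J22 h1 h2 N1 N2 =
      ∑ k1 ∈ Finset.range (N1+1), ∑ k2 ∈ Finset.range (N2+1),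
        (N1.choose k1 : ℝ) * (N2.choose k2 : ℝ) *
          Real.exp (β * ((N1:ℝ)+N2) *
            gBip J11 J12 J22 h1 h2 a1 a2 ((2*(k1:ℝ) - N1)/N1) ((2*(k2:ℝ) - N2)/N2)) := by
    unfold Zbip
    exact sum_two_blocks N1 N2 (fun m1 m2 => Real.exp (β * ((N1:ℝ)+N2) *
      gBip J11 J12 J22 h1 h2 a1 a2 m1 m2))
  -- exponent rearrangement
  have hEQ : ∀ μ1 μ2 : ℝ,
      (2:ℝ)^N1 * Real.exp (-(N1:ℝ) * entI μ1) * ((2:ℝ)^N2 * Real.exp (-(N2:ℝ) * entI μ2))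
        * Real.exp (β * ((N1:ℝ)+N2) * gBip J11 J12 J22 h1 h2 a1 a2 μ1 μ2)
      = (2:ℝ)^(N1+N2) * Real.exp (((N1:ℝ)+N2) * fBip β J11 J12 J22 h1 h2 a1 a2 μ1 μ2) := by
    intro μ1 μ2
    have hf : ((N1:ℝ)+N2) * fBip β J11 J12 J22 h1 h2 a1 a2 μ1 μ2
        = β * ((N1:ℝ)+N2) * gBip J11 J12 J22 h1 h2 a1 a2 μ1 μ2
          - (N1:ℝ) * entI μ1 - (N2:ℝ) * entI μ2 := by
      unfold fBip
      rw [show ((N1:ℝ)+N2) * (β * gBip J11 J12 J22 h1 h2 a1 a2 μ1 μ2 - a1 * entI μ1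
          - a2 * entI μ2)
        = β * ((N1:ℝ)+N2) * gBip J11 J12 J22 h1 h2 a1 a2 μ1 μ2
          - ((N1:ℝ)+N2) * (a1 * entI μ1) - ((N1:ℝ)+N2) * (a2 * entI μ2) by ring,
        hX, hY]
    rw [hf, Real.exp_sub, Real.exp_sub, pow_add,
      show -(N1:ℝ) * entI μ1 = -((N1:ℝ) * entI μ1) by ring,
      show -(N2:ℝ) * entI μ2 = -((N2:ℝ) * entI μ2) by ring,
      Real.exp_neg, Real.exp_neg]
    field_simp
  -- the supremum set
  set S : Set ℝ := ((fun p : ℝ × ℝ =>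
      fBip β J11 J12 J22 h1 h2 a1 a2 p.1 p.2) ''
    (Set.Icc (-1 : ℝ) 1 ×ˢ Set.Icc (-1 : ℝ) 1)) with hS_def
  have hBdd : BddAbove S := by
    refine ⟨β * (|J11| + |J12| + |J22| + |h1| + |h2|) + 2, ?_⟩
    rintro y ⟨⟨μ1, μ2⟩, ⟨hμ1, hμ2⟩, rfl⟩
    simp only at hμ1 hμ2 ⊢
    have hμ1' : |μ1| ≤ 1 := abs_le.mpr ⟨hμ1.1, hμ1.2⟩
    have hμ2' : |μ2| ≤ 1 := abs_le.mpr ⟨hμ2.1, hμ2.2⟩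
    have hg := gBip_le J11 J12 J22 h1 h2 a1 a2 μ1 μ2 ha1pos.le ha1le ha2pos.le ha2le hμ1' hμ2'
    have he1 := (entI_bounds hμ1').1
    have he2 := (entI_bounds hμ2').1
    have hq1 : -a1 ≤ a1 * entI μ1 := by nlinarith
    have hq2 : -a2 ≤ a2 * entI μ2 := by nlinarith
    have hβg : β * gBip J11 J12 J22 h1 h2 a1 a2 μ1 μ2
        ≤ β * (|J11| + |J12| + |J22| + |h1| + |h2|) := mul_le_mul_of_nonneg_left hg hβ.le
    unfold fBip
    linarith
  have hle_sSup : ∀ μ1 μ2 : ℝ, μ1 ∈ Set.Icc (-1:ℝ) 1 → μ2 ∈ Set.Icc (-1:ℝ) 1 →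
      fBip β J11 J12 J22 h1 h2 a1 a2 μ1 μ2 ≤ sSup S := by
    intro μ1 μ2 hμ1 hμ2
    exact le_csSup hBdd ⟨(μ1, μ2), Set.mk_mem_prod hμ1 hμ2, rfl⟩
  constructor
  · -- lower bound
    intro μ1 μ2 hμ1 hμ2 ⟨z1, hz1⟩ ⟨z2, hz2⟩
    obtain ⟨l1, r1⟩ := abs_le.mp hμ1
    obtain ⟨l2, r2⟩ := abs_le.mp hμ2
    have hz1nn : 0 ≤ z1 := by
      have : (0:ℝ) ≤ (z1:ℝ) := by rw [← hz1]; nlinarith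
      exact_mod_cast this
    have hz2nn : 0 ≤ z2 := by
      have : (0:ℝ) ≤ (z2:ℝ) := by rw [← hz2]; nlinarith
      exact_mod_cast this
    lift z1 to ℕ using hz1nn with k1
    lift z2 to ℕ using hz2nn with k2
    rw [Int.cast_natCast] at hz1 hz2
    have hk1N : k1 ≤ N1 := by
      have : (k1:ℝ) ≤ N1 := by rw [← hz1]; nlinarith
      exact_mod_cast this
    have hk2N : k2 ≤ N2 := by
      have : (k2:ℝ) ≤ N2 := by rw [← hz2]; nlinarith
      exact_mod_cast this
    have hμ1eq : μ1 = (2*(k1:ℝ) - N1)/N1 := by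
      rw [eq_div_iff hN1r.ne']
      linarith [hz1]
    have hμ2eq : μ2 = (2*(k2:ℝ) - N2)/N2 := by
      rw [eq_div_iff hN2r.ne']
      linarith [hz2]
    rw [hμ1eq, hμ2eq]
    have hL1 := ent_le_choose N1 k1 hN1 hk1N
    have hL2 := ent_le_choose N2 k2 hN2 hk2N
    set E : ℝ := Real.exp (β * ((N1:ℝ)+N2) *
      gBip J11 J12 J22 h1 h2 a1 a2 ((2*(k1:ℝ) - N1)/N1) ((2*(k2:ℝ) - N2)/N2)) with hE_def
    have hstep : Real.exp (-2) * ((2:ℝ)^N1 * Real.exp (-(N1:ℝ)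
          * entI ((2*(k1:ℝ) - N1)/N1))) / Real.sqrt N1
        * (Real.exp (-2) * ((2:ℝ)^N2 * Real.exp (-(N2:ℝ)
          * entI ((2*(k2:ℝ) - N2)/N2))) / Real.sqrt N2) * E
        ≤ (N1.choose k1 : ℝ) * (N2.choose k2 : ℝ) * E := by
      apply mul_le_mul_of_nonneg_right _ (Real.exp_pos _).le
      apply mul_le_mul hL1 hL2 (by positivity) (by positivity)
    have hterm : (N1.choose k1 : ℝ) * (N2.choose k2 : ℝ) * E
        ≤ Zbip β J11 J12 J22 h1 h2 N1 N2 := by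
      rw [hZ]
      calc (N1.choose k1 : ℝ) * (N2.choose k2 : ℝ) * E
          ≤ ∑ j2 ∈ Finset.range (N2+1), (N1.choose k1 : ℝ) * (N2.choose j2 : ℝ) *
              Real.exp (β * ((N1:ℝ)+N2) *
                gBip J11 J12 J22 h1 h2 a1 a2 ((2*(k1:ℝ) - N1)/N1) ((2*(j2:ℝ) - N2)/N2)) := by
            apply Finset.single_le_sum (f := fun j2 => (N1.choose k1 : ℝ) * (N2.choose j2 : ℝ) *
              Real.exp (β * ((N1:ℝ)+N2) *
                gBip J11 J12 J22 h1 h2 a1 a2 ((2*(k1:ℝ) - N1)/N1) ((2*(j2:ℝ) - N2)/N2)))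
              (fun i _ => by positivity) (Finset.mem_range.mpr (Nat.lt_succ_of_le hk2N))
        _ ≤ _ := by
            apply Finset.single_le_sum (f := fun j1 => ∑ j2 ∈ Finset.range (N2+1),
              (N1.choose j1 : ℝ) * (N2.choose j2 : ℝ) *
              Real.exp (β * ((N1:ℝ)+N2) *
                gBip J11 J12 J22 h1 h2 a1 a2 ((2*(j1:ℝ) - N1)/N1) ((2*(j2:ℝ) - N2)/N2)))
              (fun i _ => Finset.sum_nonneg fun j _ => by positivity)
              (Finset.mem_range.mpr (Nat.lt_succ_of_le hk1N))
    refine le_trans (le_of_eq ?_) (hstep.trans hterm)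
    rw [show (1:ℝ) / Real.exp 4 = Real.exp (-4) by rw [Real.exp_neg, one_div]]
    have hsqrt : Real.sqrt ((N1:ℝ) * N2) = Real.sqrt N1 * Real.sqrt N2 :=
      Real.sqrt_mul hN1r.le _
    have hexp4 : Real.exp (-4) = Real.exp (-2) * Real.exp (-2) := by
      rw [← Real.exp_add]; norm_num
    rw [hsqrt, hexp4, hE_def]
    have h := hEQ ((2*(k1:ℝ) - N1)/N1) ((2*(k2:ℝ) - N2)/N2)
    linear_combination
      (-(Real.exp (-2) * Real.exp (-2)) / (Real.sqrt (N1:ℝ) * Real.sqrt (N2:ℝ))) * h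
  · -- upper bound
    rw [hZ]
    have hper : ∀ k1 ∈ Finset.range (N1+1), ∀ k2 ∈ Finset.range (N2+1),
        (N1.choose k1 : ℝ) * (N2.choose k2 : ℝ) *
          Real.exp (β * ((N1:ℝ)+N2) *
            gBip J11 J12 J22 h1 h2 a1 a2 ((2*(k1:ℝ) - N1)/N1) ((2*(k2:ℝ) - N2)/N2))
        ≤ (2:ℝ)^(N1+N2) * Real.exp (((N1:ℝ)+N2) * sSup S) := by
      intro k1 hk1 k2 hk2
      have hk1N : k1 ≤ N1 := Nat.lt_succ_iff.mp (Finset.mem_range.mp hk1)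
      have hk2N : k2 ≤ N2 := Nat.lt_succ_iff.mp (Finset.mem_range.mp hk2)
      calc (N1.choose k1 : ℝ) * (N2.choose k2 : ℝ) *
            Real.exp (β * ((N1:ℝ)+N2) *
              gBip J11 J12 J22 h1 h2 a1 a2 ((2*(k1:ℝ) - N1)/N1) ((2*(k2:ℝ) - N2)/N2))
          ≤ (2:ℝ)^N1 * Real.exp (-(N1:ℝ) * entI ((2*(k1:ℝ) - N1)/N1))
            * ((2:ℝ)^N2 * Real.exp (-(N2:ℝ) * entI ((2*(k2:ℝ) - N2)/N2)))
            * Real.exp (β * ((N1:ℝ)+N2) *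
              gBip J11 J12 J22 h1 h2 a1 a2 ((2*(k1:ℝ) - N1)/N1) ((2*(k2:ℝ) - N2)/N2)) := by
            apply mul_le_mul_of_nonneg_right _ (Real.exp_pos _).le
            exact mul_le_mul (choose_le_ent N1 k1 hN1 hk1N) (choose_le_ent N2 k2 hN2 hk2N)
              (by positivity) (by positivity)
        _ = (2:ℝ)^(N1+N2) * Real.exp (((N1:ℝ)+N2) *
              fBip β J11 J12 J22 h1 h2 a1 a2 ((2*(k1:ℝ) - N1)/N1) ((2*(k2:ℝ) - N2)/N2)) :=
            hEQ _ _
        _ ≤ (2:ℝ)^(N1+N2) * Real.exp (((N1:ℝ)+N2) * sSup S) := by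
            apply mul_le_mul_of_nonneg_left _ (by positivity)
            apply Real.exp_le_exp.mpr
            apply mul_le_mul_of_nonneg_left _ hNr.le
            exact hle_sSup _ _ (mu_mem_Icc N1 k1 hN1 hk1N) (mu_mem_Icc N2 k2 hN2 hk2N)
    calc ∑ k1 ∈ Finset.range (N1+1), ∑ k2 ∈ Finset.range (N2+1),
          (N1.choose k1 : ℝ) * (N2.choose k2 : ℝ) *
            Real.exp (β * ((N1:ℝ)+N2) *
              gBip J11 J12 J22 h1 h2 a1 a2 ((2*(k1:ℝ) - N1)/N1) ((2*(k2:ℝ) - N2)/N2))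
        ≤ ∑ k1 ∈ Finset.range (N1+1), ∑ k2 ∈ Finset.range (N2+1),
            (2:ℝ)^(N1+N2) * Real.exp (((N1:ℝ)+N2) * sSup S) := by
          apply Finset.sum_le_sum
          intro k1 hk1
          apply Finset.sum_le_sum
          intro k2 hk2
          exact hper k1 hk1 k2 hk2
      _ = (2 : ℝ) ^ (N1 + N2) * ((N1 : ℝ) + 1) * ((N2 : ℝ) + 1) *
            Real.exp (((N1:ℝ)+N2) * sSup S) := by
          rw [Finset.sum_const, Finset.card_range, nsmul_eq_mul, Finset.sum_const,
            Finset.card_range, nsmul_eq_mul]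
          push_cast
          ring
end

section
/- A point (μ₁,μ₂) of the open square (−1,1)² is a critical point of f (i.e., both partial derivatives of f vanish at (μ₁,μ₂)) if and only if it satisfies the mean-field equations μ₁ = tanh(β(α₁J₁₁μ₁ + α₂J₁₂μ₂ + h₁)) and μ₂ = tanh(β(α₁J₁₂μ₁ + α₂J₂₂μ₂ + h₂)). -/
lemma entI_hasDerivAt {x : ℝ} (h1 : -1 < x) (h2 : x < 1) :
    HasDerivAt entI ((Real.log (1 + x) - Real.log (1 - x)) / 2) x := by
  have hp : (0:ℝ) < 1 + x := by linarith
  have hm : (0:ℝ) < 1 - x := by linarith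
  have d1 : HasDerivAt (fun y : ℝ => 1 + y) 1 x := by
    simpa using (hasDerivAt_id x).const_add 1
  have d2 : HasDerivAt (fun y : ℝ => 1 - y) (-1) x := by
    simpa using (hasDerivAt_id x).const_sub 1
  have l1 : HasDerivAt (fun y : ℝ => Real.log (1 + y)) (1 / (1 + x)) x := by
    exact ((Real.hasDerivAt_log hp.ne').comp x d1).congr_deriv (by ring)
  have l2 : HasDerivAt (fun y : ℝ => Real.log (1 - y)) (-1 / (1 - x)) x := by
    have := (Real.hasDerivAt_log hm.ne').comp x d2
    exact this.congr_deriv (by ring)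
  have t1 : HasDerivAt (fun y : ℝ => (1 + y) * Real.log (1 + y))
      (1 * Real.log (1 + x) + (1 + x) * (1 / (1 + x))) x := d1.mul l1
  have t2 : HasDerivAt (fun y : ℝ => (1 - y) * Real.log (1 - y))
      ((-1) * Real.log (1 - x) + (1 - x) * (-1 / (1 - x))) x := d2.mul l2
  have := (t1.add t2).div_const 2
  refine this.congr_deriv ?_
  have k1 : (1 + x) * (1 / (1 + x)) = 1 := mul_one_div_cancel hp.ne'
  have k2 : (1 - x) * (-1 / (1 - x)) = -1 := by
    rw [neg_div, mul_neg, mul_one_div_cancel hm.ne']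
  rw [k1, k2]
  ring

lemma tanh_char {μ t : ℝ} (h1 : -1 < μ) (h2 : μ < 1) :
    (Real.log (1 + μ) - Real.log (1 - μ)) / 2 = t ↔ μ = Real.tanh t := by
  have hp : (0:ℝ) < 1 + μ := by linarith
  have hm : (0:ℝ) < 1 - μ := by linarith
  have hcosh : (0:ℝ) < Real.cosh t := Real.cosh_pos t
  have htanh : Real.tanh t = (Real.exp t - Real.exp (-t)) / (Real.exp t + Real.exp (-t)) := by
    rw [Real.tanh_eq_sinh_div_cosh, Real.sinh_eq, Real.cosh_eq]
    have he : Real.exp t + Real.exp (-t) ≠ 0 := by positivity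
    field_simp
  constructor
  · intro h
    have hlog : Real.log ((1 + μ) / (1 - μ)) = 2 * t := by
      rw [Real.log_div hp.ne' hm.ne']; linarith
    have hexp : (1 + μ) / (1 - μ) = Real.exp (2 * t) := by
      rw [← hlog, Real.exp_log (div_pos hp hm)]
    have h2t : Real.exp (2 * t) = Real.exp t * Real.exp t := by
      rw [← Real.exp_add]; ring_nf
    have hfrac : 1 + μ = Real.exp (2 * t) * (1 - μ) := by
      field_simp at hexp; linarith [hexp]
    rw [htanh]
    have he : (0:ℝ) < Real.exp t + Real.exp (-t) :=
      by positivity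
    rw [eq_div_iff he.ne']
    have hme : Real.exp (-t) = (Real.exp t)⁻¹ := Real.exp_neg t
    have hepos := Real.exp_pos t
    rw [h2t] at hfrac
    rw [hme]
    field_simp
    nlinarith [hfrac, hepos]
  · intro h
    subst h
    have e1 : 1 + Real.tanh t = Real.exp t / Real.cosh t := by
      rw [Real.tanh_eq_sinh_div_cosh, ← Real.cosh_add_sinh]
      field_simp
    have e2 : 1 - Real.tanh t = Real.exp (-t) / Real.cosh t := by
      rw [Real.tanh_eq_sinh_div_cosh, ← Real.cosh_sub_sinh]
      field_simp
    rw [e1, e2, Real.log_div (Real.exp_pos t).ne' hcosh.ne',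
      Real.log_div (Real.exp_pos (-t)).ne' hcosh.ne', Real.log_exp, Real.log_exp]
    ring

/-- A point of the open square is a critical point of f iff it satisfies
the mean-field equations. -/
theorem critical_iff_mean_field
    (J11 J12 J22 h1 h2 β a1 a2 : ℝ) (hβ : 0 < β)
    (ha1 : a1 ∈ Set.Ioo (0 : ℝ) 1) (ha2 : a2 ∈ Set.Ioo (0 : ℝ) 1) (hsum : a1 + a2 = 1)
    (μ1 μ2 : ℝ) (hμ1 : μ1 ∈ Set.Ioo (-1 : ℝ) 1) (hμ2 : μ2 ∈ Set.Ioo (-1 : ℝ) 1) :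
    (deriv (fun x => fBip β J11 J12 J22 h1 h2 a1 a2 x μ2) μ1 = 0 ∧
        deriv (fun y => fBip β J11 J12 J22 h1 h2 a1 a2 μ1 y) μ2 = 0) ↔
      (μ1 = Real.tanh (β * (a1 * J11 * μ1 + a2 * J12 * μ2 + h1)) ∧
        μ2 = Real.tanh (β * (a1 * J12 * μ1 + a2 * J22 * μ2 + h2))) := by
  obtain ⟨hμ1l, hμ1r⟩ := hμ1
  obtain ⟨hμ2l, hμ2r⟩ := hμ2
  set L1 := (Real.log (1 + μ1) - Real.log (1 - μ1)) / 2 with hL1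
  set L2 := (Real.log (1 + μ2) - Real.log (1 - μ2)) / 2 with hL2
  -- derivative in the first variable
  have hg1 : HasDerivAt (fun x => gBip J11 J12 J22 h1 h2 a1 a2 x μ2)
      (a1 ^ 2 * J11 * μ1 + a1 * a2 * J12 * μ2 + a1 * h1) μ1 := by
    unfold gBip
    have : HasDerivAt (fun x : ℝ =>
        (1 / 2) * (a1 ^ 2 * J11 * x ^ 2 + 2 * a1 * a2 * J12 * x * μ2 + a2 ^ 2 * J22 * μ2 ^ 2)
          + a1 * h1 * x + a2 * h2 * μ2)
        (a1 ^ 2 * J11 * μ1 + a1 * a2 * J12 * μ2 + a1 * h1) μ1 := by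
      have hx : HasDerivAt (fun x : ℝ => x) 1 μ1 := hasDerivAt_id μ1
      have hx2 : HasDerivAt (fun x : ℝ => x ^ 2) (2 * μ1) μ1 := by
        simpa using hasDerivAt_pow 2 μ1
      have h1' := ((hx2.const_mul (a1 ^ 2 * J11)).add
        (((hx.const_mul (2 * a1 * a2 * J12)).mul_const μ2).add_const
          (a2 ^ 2 * J22 * μ2 ^ 2))).const_mul (1/2)
      have := (h1'.add (hx.const_mul (a1 * h1))).add_const (a2 * h2 * μ2)
      convert this using 2
      · rfl
      · rfl
      · simp only [Pi.add_apply]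
        ring
      all_goals ring
    convert this using 2 with x
  have hf1 : HasDerivAt (fun x => fBip β J11 J12 J22 h1 h2 a1 a2 x μ2)
      (β * (a1 ^ 2 * J11 * μ1 + a1 * a2 * J12 * μ2 + a1 * h1) - a1 * L1) μ1 := by
    unfold fBip
    exact (((hg1.const_mul β).sub ((entI_hasDerivAt hμ1l hμ1r).const_mul a1)).sub_const
      (a2 * entI μ2))
  have hg2 : HasDerivAt (fun y => fBip β J11 J12 J22 h1 h2 a1 a2 μ1 y)
      (β * (a1 * a2 * J12 * μ1 + a2 ^ 2 * J22 * μ2 + a2 * h2) - a2 * L2) μ2 := by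
    unfold fBip gBip
    have hy : HasDerivAt (fun y : ℝ => y) 1 μ2 := hasDerivAt_id μ2
    have hy2 : HasDerivAt (fun y : ℝ => y ^ 2) (2 * μ2) μ2 := by
      simpa using hasDerivAt_pow 2 μ2
    have hg : HasDerivAt (fun y : ℝ =>
        (1 / 2) * (a1 ^ 2 * J11 * μ1 ^ 2 + 2 * a1 * a2 * J12 * μ1 * y + a2 ^ 2 * J22 * y ^ 2)
          + a1 * h1 * μ1 + a2 * h2 * y)
        (a1 * a2 * J12 * μ1 + a2 ^ 2 * J22 * μ2 + a2 * h2) μ2 := by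
      have h1' := (((hy.const_mul (2 * a1 * a2 * J12 * μ1)).add
        (hy2.const_mul (a2 ^ 2 * J22))).const_add (a1 ^ 2 * J11 * μ1 ^ 2)).const_mul (1/2)
      have := (h1'.add_const (a1 * h1 * μ1)).add (hy.const_mul (a2 * h2))
      convert this using 2
      · rfl
      · rfl
      · simp only [Pi.add_apply]
        ring
      all_goals ring
    exact ((hg.const_mul β).sub_const (a1 * entI μ1)).sub
      ((entI_hasDerivAt hμ2l hμ2r).const_mul a2)
  have d1 : deriv (fun x => fBip β J11 J12 J22 h1 h2 a1 a2 x μ2) μ1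
      = β * (a1 ^ 2 * J11 * μ1 + a1 * a2 * J12 * μ2 + a1 * h1) - a1 * L1 := hf1.deriv
  have d2 : deriv (fun y => fBip β J11 J12 J22 h1 h2 a1 a2 μ1 y) μ2
      = β * (a1 * a2 * J12 * μ1 + a2 ^ 2 * J22 * μ2 + a2 * h2) - a2 * L2 := hg2.deriv
  rw [d1, d2]
  have ha1' : a1 ≠ 0 := ne_of_gt ha1.1
  have ha2' : a2 ≠ 0 := ne_of_gt ha2.1
  have e1 : (β * (a1 ^ 2 * J11 * μ1 + a1 * a2 * J12 * μ2 + a1 * h1) - a1 * L1 = 0)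
      ↔ L1 = β * (a1 * J11 * μ1 + a2 * J12 * μ2 + h1) := by
    constructor
    · intro h
      have : a1 * (β * (a1 * J11 * μ1 + a2 * J12 * μ2 + h1) - L1) = 0 := by linarith [h]
      have := (mul_eq_zero.mp this).resolve_left ha1'
      linarith
    · intro h; rw [h]; ring
  have e2 : (β * (a1 * a2 * J12 * μ1 + a2 ^ 2 * J22 * μ2 + a2 * h2) - a2 * L2 = 0)
      ↔ L2 = β * (a1 * J12 * μ1 + a2 * J22 * μ2 + h2) := by
    constructor
    · intro h
      have : a2 * (β * (a1 * J12 * μ1 + a2 * J22 * μ2 + h2) - L2) = 0 := by linarith [h]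
      have := (mul_eq_zero.mp this).resolve_left ha2'
      linarith
    · intro h; rw [h]; ring
  rw [e1, e2, hL1, hL2, tanh_char hμ1l hμ1r, tanh_char hμ2l hμ2r]
end

section
/- For every real c > 1, the equation x = tanh(c·x) has exactly one solution x in the open interval (0,1); for every real c with 0 < c ≤ 1, the equation x = tanh(c·x) has no solution x in (0,1). -/
open Real

lemma my_hasDerivAt_tanh (x : ℝ) :
    HasDerivAt Real.tanh (1 / Real.cosh x ^ 2) x := by
  have h := (Real.hasDerivAt_sinh x).div (Real.hasDerivAt_cosh x)
    (ne_of_gt (Real.cosh_pos x))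
  have : (fun y => Real.sinh y / Real.cosh y) = Real.tanh := by
    funext y; rw [Real.tanh_eq_sinh_div_cosh]
  rw [show (Real.sinh / Real.cosh) = Real.tanh from this] at h
  refine h.congr_deriv ?_
  have := Real.cosh_sq_sub_sinh_sq x
  rw [div_left_inj' (by positivity)]
  nlinarith [Real.cosh_pos x]

lemma my_tanh_lt_one (x : ℝ) : Real.tanh x < 1 := by
  rw [Real.tanh_eq_sinh_div_cosh, div_lt_one (Real.cosh_pos x)]
  nlinarith [Real.cosh_sub_sinh x, Real.exp_pos (-x)]

lemma my_tanh_lt_self {x : ℝ} (hx : 0 < x) : Real.tanh x < x := by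
  obtain ⟨ξ, hξ, hval⟩ := exists_hasDerivAt_eq_slope Real.tanh
    (fun y => 1 / Real.cosh y ^ 2) hx
    (fun y _ => (my_hasDerivAt_tanh y).continuousAt.continuousWithinAt)
    (fun y _ => my_hasDerivAt_tanh y)
  have h1 : (1:ℝ) < Real.cosh ξ := Real.one_lt_cosh.2 (ne_of_gt hξ.1)
  have h2 : 1 / Real.cosh ξ ^ 2 < 1 := by
    rw [div_lt_one (by positivity)]; nlinarith
  rw [hval] at h2
  rw [Real.tanh_zero] at h2
  have := (div_lt_one (by linarith : (0:ℝ) < x - 0)).1 h2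
  linarith

lemma my_tanh_ge {t : ℝ} (ht : 0 ≤ t) : t / (1 + t) ≤ Real.tanh t := by
  rw [Real.tanh_eq_sinh_div_cosh, Real.sinh_eq, Real.cosh_eq]
  rw [div_le_div_iff₀ (by linarith) (by positivity)]
  have hu : Real.exp (-t) = 1 / Real.exp t := by
    rw [Real.exp_neg]; ring
  have h2 : 1 + 2 * t ≤ Real.exp t * Real.exp t := by
    rw [← Real.exp_add]
    have := Real.add_one_le_exp (t + t)
    linarith
  have hup : 0 < Real.exp t := Real.exp_pos t
  rw [hu]
  have hv : Real.exp t * (1 / Real.exp t) = 1 := by field_simp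
  nlinarith [h2, hup, hv]

lemma my_tanh_mono {a b : ℝ} (h0 : 0 < a) (hab : a < b) :
    Real.tanh a < Real.tanh b := by
  obtain ⟨ξ, hξ, hval⟩ := exists_hasDerivAt_eq_slope Real.tanh
    (fun y => 1 / Real.cosh y ^ 2) hab
    (fun y _ => (my_hasDerivAt_tanh y).continuousAt.continuousWithinAt)
    (fun y _ => my_hasDerivAt_tanh y)
  have : 0 < 1 / Real.cosh ξ ^ 2 := by positivity
  rw [hval, div_pos_iff] at this
  rcases this with ⟨h1, _⟩ | ⟨_, h2⟩
  · linarith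
  · linarith

theorem tanh_fixed_point (c : ℝ) :
    (1 < c → ∃! x : ℝ, x ∈ Set.Ioo (0 : ℝ) 1 ∧ x = Real.tanh (c * x)) ∧
    (0 < c → c ≤ 1 → ∀ x ∈ Set.Ioo (0 : ℝ) 1, x ≠ Real.tanh (c * x)) := by
  constructor
  · intro hc
    set f : ℝ → ℝ := fun x => Real.tanh (c * x) - x with hf
    have hderiv : ∀ x : ℝ, HasDerivAt f (c * (1 / Real.cosh (c * x) ^ 2) - 1) x := by
      intro x
      have h1 : HasDerivAt (fun x : ℝ => c * x) c x := by
        simpa using (hasDerivAt_id x).const_mul c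
      have h2 := (my_hasDerivAt_tanh (c * x)).comp x h1
      have h3 := h2.sub (hasDerivAt_id x)
      exact (show HasDerivAt f _ x from h3).congr_deriv (by ring)
    have hcont : Continuous f := by
      have : Differentiable ℝ f := fun x => (hderiv x).differentiableAt
      exact this.continuous
    -- existence
    have hx0 : (0:ℝ) < (c - 1) / c := div_pos (by linarith) (by linarith)
    have hx1 : (c - 1) / c < 1 := by
      rw [div_lt_one (by linarith)]; linarith
    have hfx0 : 0 ≤ f ((c - 1) / c) := by
      have hcx : c * ((c - 1) / c) = c - 1 := by field_simp
      have := my_tanh_ge (t := c - 1) (by linarith)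
      have heq : (c - 1) / (1 + (c - 1)) = (c - 1) / c := by ring_nf
      rw [heq] at this
      simp only [hf, hcx]
      linarith
    have hf1 : f 1 < 0 := by
      have := my_tanh_lt_one (c * 1)
      simp only [hf]; linarith
    obtain ⟨r, hrmem, hr⟩ := intermediate_value_Icc' (le_of_lt hx1)
      hcont.continuousOn (Set.mem_Icc.2 ⟨le_of_lt hf1, hfx0⟩)
    have hrlt1 : r < 1 := by
      rcases lt_or_eq_of_le hrmem.2 with h | h
      · exact h
      · rw [h] at hr; linarith
    have hrpos : 0 < r := lt_of_lt_of_le hx0 hrmem.1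
    -- uniqueness via Rolle
    have key : ∀ a b : ℝ, 0 < a → a < b → f a = 0 → f b = 0 → False := by
      intro a b ha hab hfa hfb
      have hf0 : f 0 = 0 := by simp [hf]
      obtain ⟨ξ₁, hξ₁, hv₁⟩ := exists_hasDerivAt_eq_zero ha
        hcont.continuousOn (hf0.trans hfa.symm) (fun y _ => hderiv y)
      obtain ⟨ξ₂, hξ₂, hv₂⟩ := exists_hasDerivAt_eq_zero hab
        hcont.continuousOn (hfa.trans hfb.symm) (fun y _ => hderiv y)
      have hc1pos : 0 < Real.cosh (c * ξ₁) := Real.cosh_pos _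
      have hc2pos : 0 < Real.cosh (c * ξ₂) := Real.cosh_pos _
      have he1 : Real.cosh (c * ξ₁) ^ 2 = c := by
        have h := hv₁
        field_simp at h
        nlinarith [Real.cosh_pos (c * ξ₁)]
      have he2 : Real.cosh (c * ξ₂) ^ 2 = c := by
        have h := hv₂
        field_simp at h
        nlinarith [Real.cosh_pos (c * ξ₂)]
      have hlt : Real.cosh (c * ξ₁) < Real.cosh (c * ξ₂) := by
        rw [Real.cosh_lt_cosh]
        have h1 : 0 < ξ₁ := hξ₁.1
        have h2 : ξ₁ < ξ₂ := lt_trans hξ₁.2 hξ₂.1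
        rw [abs_of_pos (by positivity), abs_of_pos (by nlinarith)]
        nlinarith
      nlinarith
    refine ⟨r, ⟨⟨hrpos, hrlt1⟩, ?_⟩, ?_⟩
    · simp only [hf] at hr; linarith
    · rintro y ⟨⟨hy0, hy1⟩, hy⟩
      have hfy : f y = 0 := by simp only [hf]; linarith
      have hfr : f r = 0 := hr
      rcases lt_trichotomy y r with h | h | h
      · exact absurd (key y r hy0 h hfy hfr) (fun h => h)
      · exact h
      · exact absurd (key r y hrpos h hfr hfy) (fun h => h)
  · rintro hc hc1 x ⟨hx0, hx1⟩ heq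
    have h1 : Real.tanh (c * x) ≤ Real.tanh x := by
      rcases lt_or_eq_of_le (by nlinarith : c * x ≤ x) with h | h
      · exact le_of_lt (my_tanh_mono (by positivity) h)
      · rw [h]
    have h2 : Real.tanh x < x := my_tanh_lt_self hx0
    linarith
end

section
/- (Proposition 2, case 1a) Assume J₁₁ > 0, J₁₂ < 0 and set λ_M = J₁₁ − J₁₂. If 0 < β ≤ 2/λ_M, then the origin (0,0) is the unique critical point of f in (−1,1)², and it is a local maximum point of f. -/
/-- Pressure functional of the symmetric zero-field bipartite mean-field model
(α₁ = α₂ = 1/2, J₁₁ = J₂₂, h₁ = h₂ = 0). -/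
noncomputable def fSym (β J11 J12 : ℝ) (μ : ℝ × ℝ) : ℝ :=
  β / 8 * (J11 * (μ.1 ^ 2 + μ.2 ^ 2) + 2 * J12 * μ.1 * μ.2) - (entI μ.1 + entI μ.2) / 2

/-- A critical point of f: a point of the open square (−1,1)² where both partial
derivatives of f vanish. -/
def IsCritPt (β J11 J12 : ℝ) (μ : ℝ × ℝ) : Prop :=
  μ.1 ∈ Set.Ioo (-1 : ℝ) 1 ∧ μ.2 ∈ Set.Ioo (-1 : ℝ) 1 ∧
    deriv (fun x => fSym β J11 J12 (x, μ.2)) μ.1 = 0 ∧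
    deriv (fun y => fSym β J11 J12 (μ.1, y)) μ.2 = 0

lemma hasDerivAt_g {y : ℝ} (h1 : -1 < y) (h2 : y < 1) :
    HasDerivAt (fun t : ℝ => Real.log (1+t) - Real.log (1-t) - 2*t)
      (1/(1+y) + 1/(1-y) - 2) y := by
  have hp : (0:ℝ) < 1 + y := by linarith
  have hm : (0:ℝ) < 1 - y := by linarith
  have d1 : HasDerivAt (fun t : ℝ => Real.log (1+t)) (1/(1+y)) y := by
    have := (Real.hasDerivAt_log hp.ne').comp y ((hasDerivAt_id y).const_add 1)
    simpa [Function.comp_def] using this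
  have d2 : HasDerivAt (fun t : ℝ => Real.log (1-t)) (-(1/(1-y))) y := by
    have h : HasDerivAt (fun t : ℝ => 1 - t) (-1) y := by
      simpa using (hasDerivAt_id y).const_sub 1
    have := (Real.hasDerivAt_log hm.ne').comp y h
    refine this.congr_deriv ?_
    field_simp
  have := (d1.sub d2).sub ((hasDerivAt_id y).const_mul 2)
  refine this.congr_deriv ?_
  ring

lemma log_ineq {x : ℝ} (h0 : 0 < x) (h1 : x < 1) :
    2*x < Real.log (1+x) - Real.log (1-x) := by
  have mono : StrictMonoOn (fun t : ℝ => Real.log (1+t) - Real.log (1-t) - 2*t)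
      (Set.Ico 0 1) := by
    apply strictMonoOn_of_deriv_pos (convex_Ico 0 1)
    · intro y hy
      exact (hasDerivAt_g (by linarith [hy.1]) hy.2).continuousAt.continuousWithinAt
    · rw [interior_Ico]
      intro y hy
      rw [(hasDerivAt_g (by linarith [hy.1]) hy.2).deriv]
      have hp : (0:ℝ) < 1 + y := by linarith [hy.1]
      have hm : (0:ℝ) < 1 - y := by linarith [hy.2]
      rw [sub_pos, div_add_div _ _ hp.ne' hm.ne', lt_div_iff₀ (mul_pos hp hm)]
      nlinarith [mul_pos hy.1 hy.1]
  have h := mono (Set.mem_Ico.2 ⟨le_refl 0, one_pos⟩) (Set.mem_Ico.2 ⟨h0.le, h1⟩) h0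
  simp at h
  linarith

lemma xL {x : ℝ} (h1 : -1 < x) (h2 : x < 1) (hx : x ≠ 0) :
    2*x^2 < x*(Real.log (1+x) - Real.log (1-x)) := by
  rcases lt_or_gt_of_ne hx with h | h
  · have key := log_ineq (x := -x) (by linarith) (by linarith)
    rw [show (1:ℝ) + -x = 1 - x by ring, show (1:ℝ) - -x = 1 + x by ring] at key
    nlinarith [mul_pos (neg_pos.2 h) (sub_pos.2 key)]
  · nlinarith [mul_pos h (sub_pos.2 (log_ineq h h2))]

lemma hasDerivAt_entI {x : ℝ} (h1 : -1 < x) (h2 : x < 1) :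
    HasDerivAt entI ((Real.log (1+x) - Real.log (1-x))/2) x := by
  have hp : (0:ℝ) < 1 + x := by linarith
  have hm : (0:ℝ) < 1 - x := by linarith
  have dl1 : HasDerivAt (fun t : ℝ => Real.log (1+t)) (1/(1+x)) x := by
    have := (Real.hasDerivAt_log hp.ne').comp x ((hasDerivAt_id x).const_add 1)
    simpa [Function.comp_def] using this
  have dl2 : HasDerivAt (fun t : ℝ => Real.log (1-t)) (-(1/(1-x))) x := by
    have h : HasDerivAt (fun t : ℝ => 1 - t) (-1) x := by
      simpa using (hasDerivAt_id x).const_sub 1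
    have := (Real.hasDerivAt_log hm.ne').comp x h
    refine this.congr_deriv ?_
    field_simp
  have d1 : HasDerivAt (fun t : ℝ => (1+t) * Real.log (1+t)) (Real.log (1+x) + 1) x := by
    have := ((hasDerivAt_id x).const_add 1).mul dl1
    refine this.congr_deriv ?_
    field_simp
    simp only [id_eq]
    ring
  have d2 : HasDerivAt (fun t : ℝ => (1-t) * Real.log (1-t)) (-(Real.log (1-x) + 1)) x := by
    have hb : HasDerivAt (fun t : ℝ => 1 - t) (-1) x := by
      simpa using (hasDerivAt_id x).const_sub 1
    have := hb.mul dl2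
    refine this.congr_deriv ?_
    field_simp
    ring
  have := (d1.add d2).div_const 2
  have hfe : entI = fun t : ℝ => ((1+t) * Real.log (1+t) + (1-t) * Real.log (1-t)) / 2 := rfl
  rw [hfe]
  refine this.congr_deriv ?_
  ring

lemma entI_even (x : ℝ) : entI (-x) = entI x := by
  unfold entI
  rw [show (1:ℝ) + -x = 1 - x by ring, show (1:ℝ) - -x = 1 + x by ring]
  ring

lemma entI_ge {x : ℝ} (h1 : -1 < x) (h2 : x < 1) : x^2/2 ≤ entI x := by
  suffices key : ∀ y : ℝ, 0 ≤ y → y < 1 → y^2/2 ≤ entI y by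
    rcases le_or_gt 0 x with h | h
    · exact key x h h2
    · calc x^2/2 = (-x)^2/2 := by ring
        _ ≤ entI (-x) := key (-x) (by linarith) (by linarith)
        _ = entI x := entI_even x
  intro y hy0 hy1
  have mono : MonotoneOn (fun t : ℝ => entI t - t^2/2) (Set.Ico 0 1) := by
    apply monotoneOn_of_deriv_nonneg (convex_Ico 0 1)
    · intro t ht
      exact ((hasDerivAt_entI (by linarith [ht.1]) ht.2).sub
        ((hasDerivAt_pow 2 t).div_const 2)).continuousAt.continuousWithinAt
    · rw [interior_Ico]
      intro t ht
      exact ((hasDerivAt_entI (by linarith [ht.1]) ht.2).sub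
        ((hasDerivAt_pow 2 t).div_const 2)).differentiableAt.differentiableWithinAt
    · rw [interior_Ico]
      intro t ht
      rw [HasDerivAt.deriv (f := fun t => entI t - t^2/2) ((hasDerivAt_entI (by linarith [ht.1]) ht.2).sub
        ((hasDerivAt_pow 2 t).div_const 2))]
      have := log_ineq ht.1 ht.2
      simp only [Nat.cast_ofNat, pow_one]
      linarith
  have h0 : entI 0 = 0 := by simp [entI]
  have := mono (Set.mem_Ico.2 ⟨le_refl 0, one_pos⟩) (Set.mem_Ico.2 ⟨hy0, hy1⟩) hy0
  simp only [h0] at this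
  norm_num at this
  linarith

lemma hasDerivAt_fSym_fst (β J11 J12 b : ℝ) {a : ℝ} (h1 : -1 < a) (h2 : a < 1) :
    HasDerivAt (fun x => fSym β J11 J12 (x, b))
      (β/4*(J11*a + J12*b) - (Real.log (1+a) - Real.log (1-a))/4) a := by
  have hE := hasDerivAt_entI h1 h2
  have h1' : HasDerivAt (fun x : ℝ => x^2) (2*a) a := by
    simpa using hasDerivAt_pow 2 a
  have h2' : HasDerivAt (fun x : ℝ => J11*(x^2+b^2)+2*J12*x*b) (J11*(2*a)+2*J12*b) a := by
    have := ((h1'.add_const (b^2)).const_mul J11).add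
      (((hasDerivAt_id a).const_mul (2*J12)).mul_const b)
    refine this.congr_deriv ?_
    ring
  have key := (h2'.const_mul (β/8)).sub ((hE.add_const (entI b)).div_const 2)
  have hfe : (fun x => fSym β J11 J12 (x, b)) =
      fun x : ℝ => β/8 * (J11*(x^2+b^2)+2*J12*x*b) - (entI x + entI b)/2 := rfl
  rw [hfe]
  refine key.congr_deriv ?_
  ring

lemma hasDerivAt_fSym_snd (β J11 J12 a : ℝ) {b : ℝ} (h1 : -1 < b) (h2 : b < 1) :
    HasDerivAt (fun y => fSym β J11 J12 (a, y))
      (β/4*(J11*b + J12*a) - (Real.log (1+b) - Real.log (1-b))/4) b := by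
  have hE := hasDerivAt_entI h1 h2
  have h1' : HasDerivAt (fun y : ℝ => y^2) (2*b) b := by
    simpa using hasDerivAt_pow 2 b
  have h2' : HasDerivAt (fun y : ℝ => J11*(a^2+y^2)+2*J12*a*y) (J11*(2*b)+2*J12*a) b := by
    have := ((h1'.const_add (a^2)).const_mul J11).add
      (((hasDerivAt_id b).const_mul (2*J12*a)))
    refine this.congr_deriv ?_
    ring
  have key := (h2'.const_mul (β/8)).sub ((hE.const_add (entI a)).div_const 2)
  have hfe : (fun y => fSym β J11 J12 (a, y)) =
      fun y : ℝ => β/8 * (J11*(a^2+y^2)+2*J12*a*y) - (entI a + entI y)/2 := rfl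
  rw [hfe]
  refine key.congr_deriv ?_
  ring

/-- Proposition 2, case 1a: for J₁₁ > 0, J₁₂ < 0 and 0 < β ≤ 2/λ_M, the origin is the
unique critical point of f and a local maximum point. -/
theorem prop2_case1a (β J11 J12 : ℝ) (hJ11 : 0 < J11) (hJ12 : J12 < 0)
    (hβ0 : 0 < β) (hβ : β ≤ 2 / (J11 - J12)) :
    (∀ μ : ℝ × ℝ, IsCritPt β J11 J12 μ ↔ μ = (0, 0)) ∧
      IsLocalMax (fSym β J11 J12) (0, 0) := by
  have hlam : 0 < J11 - J12 := by linarith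
  have hblam : β * (J11 - J12) ≤ 2 := by
    rw [le_div_iff₀ hlam] at hβ
    linarith
  constructor
  · rintro ⟨a, b⟩
    constructor
    · rintro ⟨⟨ha1, ha2⟩, ⟨hb1, hb2⟩, hda, hdb⟩
      simp only at ha1 ha2 hb1 hb2 hda hdb
      rw [(hasDerivAt_fSym_fst β J11 J12 b ha1 ha2).deriv] at hda
      rw [(hasDerivAt_fSym_snd β J11 J12 a hb1 hb2).deriv] at hdb
      have hLa : Real.log (1+a) - Real.log (1-a) = β*(J11*a+J12*b) := by linarith
      have hLb : Real.log (1+b) - Real.log (1-b) = β*(J11*b+J12*a) := by linarith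
      have hsum : a*(Real.log (1+a) - Real.log (1-a)) + b*(Real.log (1+b) - Real.log (1-b))
          = β*(J11*(a^2+b^2)+2*J12*a*b) := by
        rw [hLa, hLb]; ring
      have hQ : β*(J11*(a^2+b^2)+2*J12*a*b) ≤ 2*(a^2+b^2) := by
        nlinarith [mul_nonneg (sub_nonneg.2 hblam) (add_nonneg (sq_nonneg a) (sq_nonneg b)),
          mul_nonneg (mul_nonneg hβ0.le (neg_nonneg.2 hJ12.le)) (sq_nonneg (a+b))]
      have hA : 2*a^2 ≤ a*(Real.log (1+a) - Real.log (1-a)) := by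
        rcases eq_or_ne a 0 with rfl | ha
        · simp
        · exact (xL ha1 ha2 ha).le
      have hB : 2*b^2 ≤ b*(Real.log (1+b) - Real.log (1-b)) := by
        rcases eq_or_ne b 0 with rfl | hb
        · simp
        · exact (xL hb1 hb2 hb).le
      have haz : a = 0 := by
        by_contra ha
        have := xL ha1 ha2 ha
        linarith
      have hbz : b = 0 := by
        by_contra hb
        have := xL hb1 hb2 hb
        linarith
      simp [haz, hbz]
    · intro h
      rw [Prod.mk.injEq] at h
      obtain ⟨rfl, rfl⟩ := h
      refine ⟨by norm_num, by norm_num, ?_, ?_⟩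
      · rw [(hasDerivAt_fSym_fst β J11 J12 0 (by norm_num) (by norm_num)).deriv]
        norm_num
      · rw [(hasDerivAt_fSym_snd β J11 J12 0 (by norm_num) (by norm_num)).deriv]
        norm_num
  · have h0 : fSym β J11 J12 (0, 0) = 0 := by
      simp [fSym, entI]
    have hball : Metric.ball ((0:ℝ), (0:ℝ)) 1 ∈ nhds ((0:ℝ), (0:ℝ)) :=
      Metric.ball_mem_nhds _ one_pos
    refine Filter.eventually_of_mem hball ?_
    rintro ⟨a, b⟩ hμ
    rw [Metric.mem_ball, Prod.dist_eq] at hμ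
    simp only [Real.dist_eq, sub_zero] at hμ
    have ha : |a| < 1 := lt_of_le_of_lt (le_max_left _ _) hμ
    have hb : |b| < 1 := lt_of_le_of_lt (le_max_right _ _) hμ
    rw [abs_lt] at ha hb
    have ea := entI_ge ha.1 ha.2
    have eb := entI_ge hb.1 hb.2
    rw [h0]
    show β / 8 * (J11 * (a ^ 2 + b ^ 2) + 2 * J12 * a * b) - (entI a + entI b) / 2 ≤ 0
    nlinarith [mul_nonneg (sub_nonneg.2 hblam) (add_nonneg (sq_nonneg a) (sq_nonneg b)),
      mul_nonneg (mul_nonneg hβ0.le (neg_nonneg.2 hJ12.le)) (sq_nonneg (a+b))]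
end
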